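/- Let G be a hexacyclic graph (a connected simple graph on n ≥ 8 vertices with n+5 edges). Then the inverse degree ρ(G) = Σ_{v} 1/deg(v) satisfies (n−10)/2 + 10/3 ≤ ρ(G) ≤ (n−4) + 1/(n−1); the upper bound is attained by a graph with degree sequence (n−1, 4^4, 1^{n−5}) and, for n ≥ 10, the lower bound is attained by a graph with degree sequence (3^{10}, 2^{n−10}). -/

import Mathlib

/-- The inverse degree of a graph on `Fin n`: the sum over all vertices of the
reciprocal of the degree. -/
noncomputable def inverseDegree {n : ℕ} (G : SimpleGraph (Fin n)) : ℝ :=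
  ∑ v : Fin n, (1 : ℝ) / ((G.neighborSet v).ncard : ℝ)

/-- `d` (0-indexed) is the degree sequence of `G`: some relabelling of the
vertices realizes the degrees `d 0, …, d (n-1)`. -/
def IsDegreeSequence {n : ℕ} (G : SimpleGraph (Fin n)) (d : ℕ → ℕ) : Prop :=
  ∃ σ : Equiv.Perm (Fin n), ∀ i : Fin n, (G.neighborSet (σ i)).ncard = d (i : ℕ)

open Finset SimpleGraph

lemma pair_ineq (a b : ℝ) (ha : 0 ≤ a) (hb : 0 ≤ b) :
    1 / (4 + a) + 1 / (4 + b) ≤ 1 / 4 + 1 / (4 + a + b) := by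
  have h1 : (0:ℝ) < 4 + a := by linarith
  have h2 : (0:ℝ) < 4 + b := by linarith
  have h3 : (0:ℝ) < 4 + a + b := by linarith
  rw [div_add_div _ _ (ne_of_gt h1) (ne_of_gt h2), div_add_div _ _ (by norm_num) (ne_of_gt h3),
    div_le_div_iff₀ (by positivity) (by positivity)]
  nlinarith [mul_nonneg ha hb, mul_nonneg (mul_nonneg ha hb) ha, mul_nonneg (mul_nonneg ha hb) hb]

lemma fold_ineq {α : Type*} [DecidableEq α] (T : Finset α) (f : α → ℕ) (hT : T.Nonempty) :
    ∑ v ∈ T, (1 : ℝ) / (4 + (f v : ℝ)) ≤ ((T.card : ℝ) - 1) / 4 + 1 / (4 + (∑ v ∈ T, f v : ℕ)) := by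
  induction T using Finset.induction with
  | empty => exact absurd hT (by simp)
  | @insert a T ha ih =>
    rcases T.eq_empty_or_nonempty with rfl | hT'
    · simp
    · rw [Finset.sum_insert ha, Finset.sum_insert ha, Finset.card_insert_of_notMem ha]
      have h1 := ih hT'
      have key := pair_ineq (f a) ((∑ v ∈ T, f v : ℕ) : ℝ) (by positivity) (by positivity)
      push_cast
      push_cast at h1 key
      have hc : (1:ℝ) ≤ T.card := by exact_mod_cast Finset.card_pos.mpr hT'
      rw [add_assoc] at *
      linarith

lemma inv_lin_lb (d : ℕ) (hd : 1 ≤ d) : 5/6 - (d:ℝ)/6 ≤ 1/(d:ℝ) := by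
  have hpos : (0:ℝ) < d := by exact_mod_cast hd
  rw [← sub_nonneg]
  have h : d ≤ 2 ∨ 3 ≤ d := by omega
  rcases h with h | h
  · interval_cases d <;> norm_num
  · have h3 : (3:ℝ) ≤ d := by exact_mod_cast h
    have expand : 1/(d:ℝ) - (5/6 - d/6) = ((d:ℝ)-2)*((d:ℝ)-3)/(6*d) := by
      field_simp; ring
    rw [expand]
    apply div_nonneg (mul_nonneg (by linarith) (by linarith)) (by linarith)

-- per-vertex bound, s = 7 case
lemma inv_ub7 (d e : ℕ) (hd2 : 2 ≤ d) (hed : e ≤ d) (he1 : 1 ≤ e) (he6 : e ≤ 6) :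
    1/(d:ℝ) ≤ 2/3 - (e:ℝ)/12 := by
  have hm : (max 2 e : ℕ) ≤ d := by omega
  have hm0 : (0:ℝ) < ((max 2 e : ℕ):ℝ) := by
    have : 1 ≤ max 2 e := by omega
    exact_mod_cast Nat.lt_of_lt_of_le Nat.zero_lt_one this
  have h1 : 1/(d:ℝ) ≤ 1/((max 2 e : ℕ):ℝ) :=
    one_div_le_one_div_of_le hm0 (by exact_mod_cast hm)
  have h2 : 1/((max 2 e : ℕ):ℝ) ≤ 2/3 - (e:ℝ)/12 := by
    interval_cases e <;> norm_num
  linarith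

lemma inv_ub6 (d e : ℕ) (hd2 : 2 ≤ d) (hed : e ≤ d) (he1 : 1 ≤ e) (he5 : e ≤ 5) :
    1/(d:ℝ) ≤ 7/10 - (e:ℝ)/10 := by
  have hm : (max 2 e : ℕ) ≤ d := by omega
  have hm0 : (0:ℝ) < ((max 2 e : ℕ):ℝ) := by
    have : 1 ≤ max 2 e := by omega
    exact_mod_cast Nat.lt_of_lt_of_le Nat.zero_lt_one this
  have h1 : 1/(d:ℝ) ≤ 1/((max 2 e : ℕ):ℝ) :=
    one_div_le_one_div_of_le hm0 (by exact_mod_cast hm)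
  have h2 : 1/((max 2 e : ℕ):ℝ) ≤ 7/10 - (e:ℝ)/10 := by
    interval_cases e <;> norm_num
  linarith

section MainBounds

section helpers
lemma walk_closed {V : Type*} {G : SimpleGraph V} (C : Set V)
    (hC : ∀ a b, a ∈ C → G.Adj a b → b ∈ C) {x y : V} (p : G.Walk x y) (hx : x ∈ C) :
    y ∈ C := by
  induction p with
  | nil => exact hx
  | cons h p ih => exact ih (hC _ _ hx h)
end helpers

variable {n : ℕ} (G : SimpleGraph (Fin n)) [DecidableRel G.Adj]

lemma degree_ge_one (hn : 2 ≤ n) (hconn : G.Connected) (v : Fin n) : 1 ≤ G.degree v := by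
  by_contra h
  have hC : ∀ a b, a ∈ ({v} : Set (Fin n)) → G.Adj a b → b ∈ ({v} : Set (Fin n)) := by
    rintro a b rfl hab
    exact absurd (G.degree_pos_iff_exists_adj a |>.mpr ⟨b, hab⟩) (by omega)
  have hall : ∀ w, w ∈ ({v} : Set (Fin n)) := fun w =>
    walk_closed _ hC (hconn.preconnected v w).some rfl
  have h1 := hall ⟨0, by omega⟩
  have h2 := hall ⟨1, by omega⟩
  simp only [Set.mem_singleton_iff, Fin.ext_iff] at h1 h2
  omega

lemma no_adj_pendants (hn : 3 ≤ n) (hconn : G.Connected) {u w : Fin n}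
    (hadj : G.Adj u w) (hu : G.degree u = 1) (hw : G.degree w = 1) : False := by
  have hNu : G.neighborFinset u = {w} :=
    Finset.eq_singleton_iff_unique_mem.mpr ⟨(G.mem_neighborFinset u w).mpr hadj, fun x hx =>
      Finset.card_le_one.mp (le_of_eq hu) x hx w ((G.mem_neighborFinset u w).mpr hadj)⟩
  have hNw : G.neighborFinset w = {u} :=
    Finset.eq_singleton_iff_unique_mem.mpr ⟨(G.mem_neighborFinset w u).mpr hadj.symm, fun x hx =>
      Finset.card_le_one.mp (le_of_eq hw) x hx u ((G.mem_neighborFinset w u).mpr hadj.symm)⟩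
  have hC : ∀ a b, a ∈ ({u, w} : Set (Fin n)) → G.Adj a b → b ∈ ({u, w} : Set (Fin n)) := by
    rintro a b (rfl | rfl) hab
    · have : b ∈ G.neighborFinset a := (G.mem_neighborFinset a b).mpr hab
      rw [hNu] at this; simp at this; simp [this]
    · have : b ∈ G.neighborFinset a := (G.mem_neighborFinset a b).mpr hab
      rw [hNw] at this; simp at this; simp [this]
  have hall : ∀ x, x ∈ ({u, w} : Set (Fin n)) := fun x =>
    walk_closed _ hC (hconn.preconnected u x).some (Or.inl rfl)
  have h0 := hall ⟨0, by omega⟩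
  have h1 := hall ⟨1, by omega⟩
  have h2 := hall ⟨2, by omega⟩
  simp only [Set.mem_insert_iff, Set.mem_singleton_iff, Fin.ext_iff] at h0 h1 h2
  omega

lemma core_neighbor (hn : 8 ≤ n) (hconn : G.Connected)
    (hsum : ∑ v, G.degree v = 2 * n + 10) (v : Fin n) :
    ∃ w, G.Adj v w ∧ G.degree w ≠ 1 := by
  by_contra hcon
  push_neg at hcon
  have hC : ∀ a b, a ∈ ({x | x = v ∨ G.Adj v x} : Set (Fin n)) → G.Adj a b →
      b ∈ ({x | x = v ∨ G.Adj v x} : Set (Fin n)) := by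
    rintro a b (rfl | hva) hab
    · exact Or.inr hab
    · have hda := hcon a hva
      have hb : b ∈ G.neighborFinset a := by rwa [mem_neighborFinset]
      have hv : v ∈ G.neighborFinset a := by rw [mem_neighborFinset]; exact hva.symm
      exact Or.inl (Finset.card_le_one.mp (le_of_eq hda) b hb v hv)
  have hall : ∀ x, x ∈ ({x | x = v ∨ G.Adj v x} : Set (Fin n)) := fun x =>
    walk_closed _ hC (hconn.preconnected v x).some (Or.inl rfl)
  have hdeg1 : ∀ w ∈ univ.erase v, G.degree w = 1 := by
    intro w hw
    rcases hall w with rfl | hadj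
    · exact absurd rfl (Finset.mem_erase.mp hw).1
    · exact hcon w hadj
  have hsum2 : ∑ w ∈ univ.erase v, G.degree w = n - 1 := by
    rw [Finset.sum_congr rfl hdeg1, Finset.sum_const, smul_eq_mul, mul_one,
      Finset.card_erase_of_mem (mem_univ v), Finset.card_univ, Fintype.card_fin]
  have htot : G.degree v + ∑ w ∈ univ.erase v, G.degree w = ∑ w, G.degree w :=
    Finset.add_sum_erase (univ : Finset (Fin n)) (fun w => G.degree w) (Finset.mem_univ v)
  have hlt : G.degree v < n := by
    have := G.degree_lt_card_verts v
    rwa [Fintype.card_fin] at this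
  omega

lemma main_bounds (hn : 8 ≤ n) (hconn : G.Connected)
    (hedges : G.edgeFinset.card = n + 5) :
    ((n : ℝ) - 10) / 2 + 10 / 3 ≤ ∑ v, (1:ℝ) / (G.degree v) ∧
      ∑ v, (1:ℝ) / (G.degree v) ≤ ((n : ℝ) - 4) + 1 / ((n : ℝ) - 1) := by
  have hsum : ∑ v, G.degree v = 2 * n + 10 := by
    rw [G.sum_degrees_eq_twice_card_edges, hedges]; ring
  have hd1 : ∀ v, 1 ≤ G.degree v := degree_ge_one G (by omega) hconn
  have hdlt : ∀ v, G.degree v < n := fun v => by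
    have := G.degree_lt_card_verts v; rwa [Fintype.card_fin] at this
  constructor
  · -- lower bound
    have key : ∀ v ∈ (univ : Finset (Fin n)),
        5/6 - (G.degree v : ℝ)/6 ≤ 1 / (G.degree v : ℝ) :=
      fun v _ => inv_lin_lb _ (hd1 v)
    have h1 : ∑ v, (5/6 - (G.degree v : ℝ)/6) ≤ ∑ v, (1:ℝ)/(G.degree v) :=
      Finset.sum_le_sum key
    have h2 : ∑ v, (5/6 - (G.degree v : ℝ)/6) = (n:ℝ) * (5/6) - (2*n+10)/6 := by
      rw [Finset.sum_sub_distrib, Finset.sum_const, Finset.card_univ, Fintype.card_fin,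
        ← Finset.sum_div, ← Nat.cast_sum, hsum]
      push_cast; ring
    rw [h2] at h1
    linarith
  · -- upper bound
    set P : Finset (Fin n) := univ.filter (fun v => G.degree v = 1) with hP
    set S : Finset (Fin n) := univ.filter (fun v => ¬ G.degree v = 1) with hS
    have hPS : P.card + S.card = n := by
      rw [hP, hS, Finset.card_filter_add_card_filter_not, Finset.card_univ,
        Fintype.card_fin]
    have hdS : ∀ v ∈ S, 2 ≤ G.degree v := by
      intro v hv
      have := (Finset.mem_filter.mp hv).2
      have := hd1 v
      omega
    -- split the sum
    have hsplit : ∑ v, (1:ℝ)/(G.degree v) = (P.card : ℝ) + ∑ v ∈ S, (1:ℝ)/(G.degree v) := by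
      rw [← Finset.sum_filter_add_sum_filter_not univ (fun v => G.degree v = 1)
        (fun v => (1:ℝ)/(G.degree v)), ← hP, ← hS]
      congr 1
      have hone : ∀ v ∈ P, (1:ℝ)/(G.degree v) = 1 := fun v hv => by
        rw [(Finset.mem_filter.mp hv).2]; norm_num
      rw [Finset.sum_congr rfl hone, Finset.sum_const, nsmul_eq_mul, mul_one]
    -- e and p
    have hNsplit : ∀ v, (G.neighborFinset v ∩ S).card + (G.neighborFinset v ∩ P).card
        = G.degree v := by
      intro v
      rw [← Finset.card_union_of_disjoint]
      · rw [← Finset.inter_union_distrib_left]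
        have : S ∪ P = univ := by
          rw [hP, hS, Finset.union_comm, Finset.filter_union_filter_not_eq]
        rw [this, Finset.inter_univ]
        rfl
      · exact Finset.disjoint_left.mpr fun a ha hb =>
          (Finset.mem_filter.mp (Finset.mem_inter.mp ha).2).2
            (Finset.mem_filter.mp (Finset.mem_inter.mp hb).2).2
    -- double counting
    have hinterB : ∀ (v : Fin n) (B : Finset (Fin n)),
        G.neighborFinset v ∩ B = B.filter (fun u => G.Adj v u) := by
      intro v B
      ext u
      simp [mem_neighborFinset, and_comm]
    have hdc : ∑ v ∈ S, (G.neighborFinset v ∩ P).card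
        = ∑ u ∈ P, (G.neighborFinset u ∩ S).card := by
      simp only [hinterB, Finset.card_filter]
      rw [Finset.sum_comm]
      exact Finset.sum_congr rfl fun u _ => Finset.sum_congr rfl fun v _ =>
        if_congr (G.adj_comm v u) rfl rfl
    have hpend : ∀ u ∈ P, (G.neighborFinset u ∩ S).card = 1 := by
      intro u hu
      have hdu : G.degree u = 1 := (Finset.mem_filter.mp hu).2
      obtain ⟨w, hw⟩ := Finset.card_eq_one.mp hdu
      have hadj : G.Adj u w := by
        rw [← mem_neighborFinset, hw]; exact Finset.mem_singleton_self w
      have hwS : w ∈ S := by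
        rw [hS, Finset.mem_filter]
        exact ⟨Finset.mem_univ w, fun h1 => no_adj_pendants G (by omega) hconn hadj hdu h1⟩
      rw [hw]
      rw [Finset.singleton_inter_of_mem hwS]
      exact Finset.card_singleton w
    have hsumpS : ∑ v ∈ S, (G.neighborFinset v ∩ P).card = P.card := by
      rw [hdc, Finset.sum_congr rfl hpend, Finset.sum_const, smul_eq_mul, mul_one]
    -- degree sums
    have hsumP : ∑ v ∈ P, G.degree v = P.card := by
      rw [Finset.sum_congr rfl (fun v hv => (Finset.mem_filter.mp hv).2),
        Finset.sum_const, smul_eq_mul, mul_one]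
    have hsumPS : ∑ v ∈ P, G.degree v + ∑ v ∈ S, G.degree v = 2*n + 10 := by
      rw [hP, hS, Finset.sum_filter_add_sum_filter_not, hsum]
    have hsumS : ∑ v ∈ S, G.degree v = 2*n + 10 - P.card := by omega
    have hsumE : ∑ v ∈ S, (G.neighborFinset v ∩ S).card = 2 * S.card + 10 := by
      have h1 : ∑ v ∈ S, ((G.neighborFinset v ∩ S).card + (G.neighborFinset v ∩ P).card)
          = ∑ v ∈ S, G.degree v := Finset.sum_congr rfl fun v _ => hNsplit v
      rw [Finset.sum_add_distrib, hsumpS] at h1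
      omega
    -- e bounds
    have heub : ∀ v ∈ S, (G.neighborFinset v ∩ S).card + 1 ≤ S.card := by
      intro v hv
      have hsub : G.neighborFinset v ∩ S ⊆ S.erase v := by
        intro u hu
        rw [Finset.mem_erase]
        refine ⟨fun h => ?_, (Finset.mem_inter.mp hu).2⟩
        subst h
        exact G.irrefl ((mem_neighborFinset _ _ _).mp (Finset.mem_inter.mp hu).1)
      have := Finset.card_le_card hsub
      rw [Finset.card_erase_of_mem hv] at this
      have : 1 ≤ S.card := Finset.card_pos.mpr ⟨v, hv⟩
      omega
    have helb : ∀ v ∈ S, 1 ≤ (G.neighborFinset v ∩ S).card := by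
      intro v hv
      obtain ⟨w, hadj, hw1⟩ := core_neighbor G hn hconn hsum v
      refine Finset.card_pos.mpr ⟨w, Finset.mem_inter.mpr ⟨?_, ?_⟩⟩
      · exact (mem_neighborFinset _ _ _).mpr hadj
      · rw [hS, Finset.mem_filter]; exact ⟨Finset.mem_univ w, hw1⟩
    -- s ≥ 5
    have hs5 : 5 ≤ S.card := by
      have h1 : ∑ v ∈ S, ((G.neighborFinset v ∩ S).card + 1) ≤ ∑ v ∈ S, S.card :=
        Finset.sum_le_sum heub
      rw [Finset.sum_add_distrib, Finset.sum_const, Finset.sum_const, smul_eq_mul,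
        smul_eq_mul, mul_one, hsumE] at h1
      by_contra hcon
      have hc4 : S.card ≤ 4 := by omega
      have : S.card * S.card ≤ 4 * S.card := Nat.mul_le_mul_right _ hc4
      omega
    -- final case analysis
    have h8R : (8:ℝ) ≤ (n:ℝ) := by exact_mod_cast hn
    have hinv : (0:ℝ) ≤ 1/((n:ℝ)-1) := by
      apply div_nonneg <;> linarith
    have hPcard : (P.card : ℝ) = (n:ℝ) - S.card := by
      have h := hPS
      have : (P.card : ℝ) + S.card = n := by exact_mod_cast h
      linarith
    rw [hsplit]
    have hcases : S.card = 5 ∨ S.card = 6 ∨ S.card = 7 ∨ 8 ≤ S.card := by omega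
    rcases hcases with h5 | h6 | h7 | h8
    · -- s = 5
      have he4 : ∀ v ∈ S, (G.neighborFinset v ∩ S).card = 4 := by
        by_contra hcon
        push_neg at hcon
        obtain ⟨v0, hv0, hne⟩ := hcon
        have hv03 : (G.neighborFinset v0 ∩ S).card ≤ 3 := by
          have := heub v0 hv0; omega
        have hrest : ∑ v ∈ S.erase v0, (G.neighborFinset v ∩ S).card ≤ 4 * (S.card - 1) := by
          calc ∑ v ∈ S.erase v0, (G.neighborFinset v ∩ S).card
              ≤ ∑ _v ∈ S.erase v0, 4 := Finset.sum_le_sum fun v hv => by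
                have := heub v (Finset.mem_of_mem_erase hv); omega
            _ = 4 * (S.card - 1) := by
                rw [Finset.sum_const, smul_eq_mul, Finset.card_erase_of_mem hv0, mul_comm]
        have htot : (G.neighborFinset v0 ∩ S).card
            + ∑ v ∈ S.erase v0, (G.neighborFinset v ∩ S).card
            = ∑ v ∈ S, (G.neighborFinset v ∩ S).card :=
          Finset.add_sum_erase S (fun v => (G.neighborFinset v ∩ S).card) hv0
        omega
      have hdegS : ∀ v ∈ S, G.degree v = 4 + (G.neighborFinset v ∩ P).card := by
        intro v hv
        have h := hNsplit v
        rw [he4 v hv] at h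
        omega
      have hsumP' : ∑ v ∈ S, (G.neighborFinset v ∩ P).card = n - 5 := by
        rw [hsumpS]; omega
      have hbig : ∑ v ∈ S, (1:ℝ)/(G.degree v)
          = ∑ v ∈ S, (1:ℝ)/(4 + ((G.neighborFinset v ∩ P).card : ℝ)) := by
        refine Finset.sum_congr rfl fun v hv => ?_
        rw [hdegS v hv]
        push_cast
        ring_nf
      rw [hbig]
      have hfold := fold_ineq S (fun v => (G.neighborFinset v ∩ P).card)
        (Finset.card_pos.mp (by omega))
      rw [hsumP', h5] at hfold
      rw [Nat.cast_sub (by omega : 5 ≤ n)] at hfold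
      have h41 : (4:ℝ) + ((n:ℝ) - (5:ℕ)) = (n:ℝ)-1 := by push_cast; ring
      rw [h41] at hfold
      rw [hPcard, h5]
      push_cast at hfold ⊢
      linarith
    · -- s = 6
      have hb : ∑ v ∈ S, (1:ℝ)/(G.degree v)
          ≤ ∑ v ∈ S, (7/10 - ((G.neighborFinset v ∩ S).card : ℝ)/10) := by
        refine Finset.sum_le_sum fun v hv => ?_
        refine inv_ub6 _ _ (hdS v hv) ?_ (helb v hv) ?_
        · have := hNsplit v; omega
        · have := heub v hv; omega
      have hb2 : ∑ v ∈ S, (7/10 - ((G.neighborFinset v ∩ S).card : ℝ)/10)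
          = (S.card : ℝ) * (7/10)
            - ((∑ v ∈ S, (G.neighborFinset v ∩ S).card : ℕ) : ℝ)/10 := by
        rw [Finset.sum_sub_distrib, Finset.sum_const, nsmul_eq_mul, ← Finset.sum_div,
          Nat.cast_sum]
      rw [hb2, hsumE, h6] at hb
      push_cast at hb
      rw [hPcard, h6]
      push_cast
      linarith
    · -- s = 7
      have hb : ∑ v ∈ S, (1:ℝ)/(G.degree v)
          ≤ ∑ v ∈ S, (2/3 - ((G.neighborFinset v ∩ S).card : ℝ)/12) := by
        refine Finset.sum_le_sum fun v hv => ?_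
        refine inv_ub7 _ _ (hdS v hv) ?_ (helb v hv) ?_
        · have := hNsplit v; omega
        · have := heub v hv; omega
      have hb2 : ∑ v ∈ S, (2/3 - ((G.neighborFinset v ∩ S).card : ℝ)/12)
          = (S.card : ℝ) * (2/3)
            - ((∑ v ∈ S, (G.neighborFinset v ∩ S).card : ℕ) : ℝ)/12 := by
        rw [Finset.sum_sub_distrib, Finset.sum_const, nsmul_eq_mul, ← Finset.sum_div,
          Nat.cast_sum]
      rw [hb2, hsumE, h7] at hb
      push_cast at hb
      rw [hPcard, h7]
      push_cast
      linarith
    · -- s ≥ 8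
      have hb : ∑ v ∈ S, (1:ℝ)/(G.degree v) ≤ ∑ _v ∈ S, (1:ℝ)/2 := by
        refine Finset.sum_le_sum fun v hv => ?_
        have h2 : (2:ℝ) ≤ (G.degree v : ℝ) := by exact_mod_cast hdS v hv
        exact one_div_le_one_div_of_le (by norm_num) h2
      rw [Finset.sum_const, nsmul_eq_mul] at hb
      have hs8 : (8:ℝ) ≤ (S.card : ℝ) := by exact_mod_cast h8
      rw [hPcard]
      linarith

end MainBounds

lemma ncard_eq_degree {n : ℕ} (G : SimpleGraph (Fin n)) [DecidableRel G.Adj] (v : Fin n) :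
    (G.neighborSet v).ncard = G.degree v := by
  rw [Set.ncard_eq_toFinset_card']; rfl

lemma inverseDegree_eq {n : ℕ} (G : SimpleGraph (Fin n)) [DecidableRel G.Adj] :
    inverseDegree G = ∑ v : Fin n, (1 : ℝ) / (G.degree v : ℝ) := by
  unfold inverseDegree
  exact Finset.sum_congr rfl fun v _ => by rw [ncard_eq_degree]

lemma edgeSet_ncard {n : ℕ} (G : SimpleGraph (Fin n)) [DecidableRel G.Adj] :
    G.edgeSet.ncard = G.edgeFinset.card := by
  rw [Set.ncard_eq_toFinset_card']
  congr 1

-- generic: sums of vertex statistics split at 5 resp 10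
lemma sum_split (n m : ℕ) (hm : m ≤ n) {M : Type*} [AddCommMonoid M] (f : ℕ → M) :
    ∑ i ∈ Finset.range n, f i = ∑ i ∈ Finset.range m, f i + ∑ i ∈ Finset.Ico m n, f i := by
  rw [Finset.range_eq_Ico, ← Finset.sum_Ico_consecutive f (by omega : 0 ≤ m) hm]
  rw [Finset.range_eq_Ico]

lemma card_val_lt (n m : ℕ) (h : m ≤ n) :
    (univ.filter (fun w : Fin n => w.val < m)).card = m := by
  have he : univ.filter (fun w : Fin n => w.val < m) = univ.map (Fin.castLEEmb h) := by
    ext w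
    simp only [mem_filter, mem_univ, true_and, Finset.mem_map, Fin.castLEEmb,
      Function.Embedding.coeFn_mk, RelEmbedding.coe_toEmbedding]
    constructor
    · intro hw; exact ⟨⟨w.val, hw⟩, by simp [Fin.ext_iff, Fin.castLE]⟩
    · rintro ⟨i, -, rfl⟩; simpa [Fin.castLE] using i.isLt
  rw [he, Finset.card_map, Finset.card_univ, Fintype.card_fin]

def H1 (n : ℕ) : SimpleGraph (Fin n) :=
  SimpleGraph.fromRel (fun v w => v.val = 0 ∨ (v.val < 5 ∧ w.val < 5))

instance (n : ℕ) : DecidableRel (H1 n).Adj := fun v w =>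
  decidable_of_iff' _ (SimpleGraph.fromRel_adj _ v w)

lemma H1_adj (n : ℕ) (v w : Fin n) :
    (H1 n).Adj v w ↔ v ≠ w ∧ (v.val = 0 ∨ w.val = 0 ∨ (v.val < 5 ∧ w.val < 5)) := by
  rw [H1, SimpleGraph.fromRel_adj]
  tauto

lemma H1_degree (n : ℕ) (hn : 8 ≤ n) (v : Fin n) :
    (H1 n).degree v = if v.val = 0 then n - 1 else if v.val < 5 then 4 else 1 := by
  have hvlt := v.isLt
  rw [← SimpleGraph.card_neighborFinset_eq_degree]
  by_cases h0 : v.val = 0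
  · have : (H1 n).neighborFinset v = univ.erase v := by
      ext w
      have hw := w.isLt
      simp only [SimpleGraph.mem_neighborFinset, H1_adj, Finset.mem_erase, Finset.mem_univ,
        and_true, ne_eq, Fin.ext_iff]
      constructor
      · rintro ⟨h1, -⟩ h2; exact h1 (by omega)
      · intro h1; exact ⟨by omega, Or.inl h0⟩
    rw [this, Finset.card_erase_of_mem (mem_univ v), Finset.card_univ, Fintype.card_fin]
    simp [h0]
  · by_cases h5 : v.val < 5
    · have : (H1 n).neighborFinset v = (univ.filter (fun w : Fin n => w.val < 5)).erase v := by
        ext w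
        have hw := w.isLt
        simp only [SimpleGraph.mem_neighborFinset, H1_adj, Finset.mem_erase, Finset.mem_filter,
          Finset.mem_univ, true_and, ne_eq, Fin.ext_iff]
        constructor
        · rintro ⟨h1, h2 | h2 | h2⟩
          · exact absurd h2 h0
          · exact ⟨by omega, by omega⟩
          · exact ⟨by omega, h2.2⟩
        · rintro ⟨h1, h2⟩
          exact ⟨by omega, Or.inr (Or.inr ⟨h5, h2⟩)⟩
      rw [this, Finset.card_erase_of_mem (by simp [h5]), card_val_lt n 5 (by omega)]
      simp [h0, h5]
    · have : (H1 n).neighborFinset v = {⟨0, by omega⟩} := by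
        ext w
        have hw := w.isLt
        simp only [SimpleGraph.mem_neighborFinset, H1_adj, Finset.mem_singleton, ne_eq,
          Fin.ext_iff]
        constructor
        · rintro ⟨h1, h2 | h2 | h2⟩
          · exact absurd h2 h0
          · exact h2
          · omega
        · intro h1; exact ⟨by omega, Or.inr (Or.inl h1)⟩
      rw [this, Finset.card_singleton]
      simp [h0, h5]

lemma H1_connected (n : ℕ) (hn : 8 ≤ n) : (H1 n).Connected := by
  have h0 : (0:ℕ) < n := by omega
  have hadj0 : ∀ w : Fin n, w ≠ ⟨0, h0⟩ → (H1 n).Adj ⟨0, h0⟩ w := by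
    intro w hw
    rw [H1_adj]
    exact ⟨Ne.symm hw, Or.inl rfl⟩
  haveI : Nonempty (Fin n) := ⟨⟨0, h0⟩⟩
  refine ⟨fun u v => ?_⟩
  have key : ∀ x : Fin n, (H1 n).Reachable ⟨0, h0⟩ x := by
    intro x
    rcases eq_or_ne x ⟨0, h0⟩ with rfl | hx
    · exact SimpleGraph.Reachable.refl _
    · exact (hadj0 x hx).reachable
  exact (key u).symm.trans (key v)

lemma H1_sum_deg (n : ℕ) (hn : 8 ≤ n) : ∑ v : Fin n, (H1 n).degree v = 2 * n + 10 := by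
  rw [Finset.sum_congr rfl (fun v (_ : v ∈ Finset.univ) => H1_degree n hn v),
    Fin.sum_univ_eq_sum_range (fun i => if i = 0 then n - 1 else if i < 5 then 4 else 1) n,
    sum_split n 5 (by omega)]
  have h1 : ∑ i ∈ Finset.range 5, (if i = 0 then n - 1 else if i < 5 then 4 else 1)
      = (n - 1) + 16 := by
    simp [Finset.sum_range_succ]
  have hc : ∀ i ∈ Finset.Ico 5 n, (if i = 0 then n - 1 else if i < 5 then 4 else 1) = 1 := by
    intro i hi
    have := (Finset.mem_Ico.mp hi).1
    rw [if_neg (by omega : ¬ i = 0), if_neg (by omega : ¬ i < 5)]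
  have h2 : ∑ i ∈ Finset.Ico 5 n, (if i = 0 then n - 1 else if i < 5 then 4 else 1)
      = n - 5 := by
    rw [Finset.sum_congr rfl hc, Finset.sum_const, Nat.card_Ico, smul_eq_mul, mul_one]
  rw [h1, h2]
  omega

lemma H1_edges (n : ℕ) (hn : 8 ≤ n) : (H1 n).edgeFinset.card = n + 5 := by
  have := (H1 n).sum_degrees_eq_twice_card_edges
  rw [H1_sum_deg n hn] at this
  omega

lemma H1_invdeg (n : ℕ) (hn : 8 ≤ n) :
    inverseDegree (H1 n) = ((n : ℝ) - 4) + 1 / ((n : ℝ) - 1) := by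
  rw [inverseDegree_eq]
  have hpt : ∀ v : Fin n, (1:ℝ) / ((H1 n).degree v : ℝ)
      = if (v : ℕ) = 0 then 1/(((n - 1 : ℕ)):ℝ) else if (v : ℕ) < 5 then 1/4 else 1 := by
    intro v
    rw [H1_degree n hn v]
    split_ifs <;> norm_num
  rw [Finset.sum_congr rfl (fun v (_ : v ∈ Finset.univ) => hpt v),
    Fin.sum_univ_eq_sum_range
      (fun i => if i = 0 then 1/(((n - 1 : ℕ)):ℝ) else if i < 5 then 1/4 else 1) n,
    sum_split n 5 (by omega)]
  have h1 : ∑ i ∈ Finset.range 5,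
      (if i = 0 then 1/(((n - 1 : ℕ)):ℝ) else if i < 5 then 1/4 else 1)
      = 1/(((n - 1 : ℕ)):ℝ) + 1 := by
    simp [Finset.sum_range_succ]
    ring
  have hc : ∀ i ∈ Finset.Ico 5 n,
      (if i = 0 then 1/(((n - 1 : ℕ)):ℝ) else if i < 5 then 1/4 else 1) = 1 := by
    intro i hi
    have := (Finset.mem_Ico.mp hi).1
    rw [if_neg (by omega : ¬ i = 0), if_neg (by omega : ¬ i < 5)]
  have h2 : ∑ i ∈ Finset.Ico 5 n,
      (if i = 0 then 1/(((n - 1 : ℕ)):ℝ) else if i < 5 then 1/4 else 1)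
      = ((n : ℝ) - 5) := by
    rw [Finset.sum_congr rfl hc, Finset.sum_const, Nat.card_Ico, nsmul_eq_mul, mul_one,
      Nat.cast_sub (by omega : 5 ≤ n)]
    norm_num
  rw [h1, h2, Nat.cast_sub (by omega : 1 ≤ n)]
  push_cast
  ring

lemma H1_degseq (n : ℕ) (hn : 8 ≤ n) :
    ∃ σ : Equiv.Perm (Fin n), ∀ i : Fin n, ((H1 n).neighborSet (σ i)).ncard
      = (fun i : ℕ => if i = 0 then n - 1 else if i < 5 then 4 else 1) (i : ℕ) := by
  refine ⟨Equiv.refl _, fun i => ?_⟩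
  rw [Equiv.refl_apply, ncard_eq_degree, H1_degree n hn]

def H2 (n : ℕ) : SimpleGraph (Fin n) :=
  SimpleGraph.fromRel (fun v w => v.val + 1 = w.val ∨ (v.val = n - 1 ∧ w.val = 0)
    ∨ (v.val + 5 = w.val ∧ w.val < 10))

instance (n : ℕ) : DecidableRel (H2 n).Adj := fun v w =>
  decidable_of_iff' _ (SimpleGraph.fromRel_adj _ v w)

lemma card_triple {n : ℕ} (a b c : Fin n) (hab : a ≠ b) (hac : a ≠ c) (hbc : b ≠ c) :
    ({a, b, c} : Finset (Fin n)).card = 3 := by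
  rw [Finset.card_insert_of_notMem (by simp [hab, hac]),
    Finset.card_insert_of_notMem (by simp [hbc]), Finset.card_singleton]

lemma fin_ne {n a b : ℕ} (ha : a < n) (hb : b < n) (h : a ≠ b) :
    (⟨a, ha⟩ : Fin n) ≠ ⟨b, hb⟩ := Fin.ne_of_val_ne h

lemma H2_adj (n : ℕ) (v w : Fin n) :
    (H2 n).Adj v w ↔ v ≠ w ∧ (v.val + 1 = w.val ∨ (v.val = n - 1 ∧ w.val = 0)
      ∨ (v.val + 5 = w.val ∧ w.val < 10) ∨ w.val + 1 = v.val ∨ (w.val = n - 1 ∧ v.val = 0)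
      ∨ (w.val + 5 = v.val ∧ v.val < 10)) := by
  rw [H2, SimpleGraph.fromRel_adj]
  tauto

lemma H2_degree (n : ℕ) (hn : 10 ≤ n) (v : Fin n) :
    (H2 n).degree v = if v.val < 10 then 3 else 2 := by
  have hv := v.isLt
  rw [← SimpleGraph.card_neighborFinset_eq_degree]
  by_cases h0 : v.val = 0
  · have he : (H2 n).neighborFinset v = {⟨1, by omega⟩, ⟨5, by omega⟩, ⟨n-1, by omega⟩} := by
      ext w
      have hw := w.isLt
      simp only [SimpleGraph.mem_neighborFinset, H2_adj, Finset.mem_insert,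
        Finset.mem_singleton, ne_eq, Fin.ext_iff]
      omega
    rw [he, card_triple _ _ _ (fin_ne _ _ (by omega)) (fin_ne _ _ (by omega)) (fin_ne _ _ (by omega)), if_pos (by omega)]
  · by_cases h4 : v.val ≤ 4
    · have he : (H2 n).neighborFinset v
          = {⟨v.val - 1, by omega⟩, ⟨v.val + 1, by omega⟩, ⟨v.val + 5, by omega⟩} := by
        ext w
        have hw := w.isLt
        simp only [SimpleGraph.mem_neighborFinset, H2_adj, Finset.mem_insert,
          Finset.mem_singleton, ne_eq, Fin.ext_iff]
        omega
      rw [he, card_triple _ _ _ (fin_ne _ _ (by omega)) (fin_ne _ _ (by omega)) (fin_ne _ _ (by omega)), if_pos (by omega)]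
    · by_cases h9 : v.val ≤ 9
      · by_cases hlast : v.val = n - 1
        · have he : (H2 n).neighborFinset v
              = {⟨v.val - 1, by omega⟩, ⟨0, by omega⟩, ⟨v.val - 5, by omega⟩} := by
            ext w
            have hw := w.isLt
            simp only [SimpleGraph.mem_neighborFinset, H2_adj, Finset.mem_insert,
              Finset.mem_singleton, ne_eq, Fin.ext_iff]
            omega
          rw [he, card_triple _ _ _ (fin_ne _ _ (by omega)) (fin_ne _ _ (by omega)) (fin_ne _ _ (by omega)), if_pos (by omega)]
        · have he : (H2 n).neighborFinset v
              = {⟨v.val - 1, by omega⟩, ⟨v.val + 1, by omega⟩, ⟨v.val - 5, by omega⟩} := by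
            ext w
            have hw := w.isLt
            simp only [SimpleGraph.mem_neighborFinset, H2_adj, Finset.mem_insert,
              Finset.mem_singleton, ne_eq, Fin.ext_iff]
            omega
          rw [he, card_triple _ _ _ (fin_ne _ _ (by omega)) (fin_ne _ _ (by omega)) (fin_ne _ _ (by omega)), if_pos (by omega)]
      · by_cases hlast : v.val = n - 1
        · have he : (H2 n).neighborFinset v
              = {⟨v.val - 1, by omega⟩, ⟨0, by omega⟩} := by
            ext w
            have hw := w.isLt
            simp only [SimpleGraph.mem_neighborFinset, H2_adj, Finset.mem_insert,
              Finset.mem_singleton, ne_eq, Fin.ext_iff]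
            omega
          rw [he, Finset.card_pair (fin_ne _ _ (by omega)), if_neg (by omega)]
        · have he : (H2 n).neighborFinset v
              = {⟨v.val - 1, by omega⟩, ⟨v.val + 1, by omega⟩} := by
            ext w
            have hw := w.isLt
            simp only [SimpleGraph.mem_neighborFinset, H2_adj, Finset.mem_insert,
              Finset.mem_singleton, ne_eq, Fin.ext_iff]
            omega
          rw [he, Finset.card_pair (fin_ne _ _ (by omega)), if_neg (by omega)]

lemma H2_connected (n : ℕ) (hn : 10 ≤ n) : (H2 n).Connected := by
  have h0 : 0 < n := by omega
  haveI : Nonempty (Fin n) := ⟨⟨0, h0⟩⟩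
  have key : ∀ (k : ℕ) (h : k < n), (H2 n).Reachable ⟨0, h0⟩ ⟨k, h⟩ := by
    intro k
    induction k with
    | zero => intro h; exact SimpleGraph.Reachable.refl _
    | succ k ih =>
      intro h
      have hk : k < n := by omega
      have hadj : (H2 n).Adj ⟨k, hk⟩ ⟨k + 1, h⟩ := by
        rw [H2_adj]
        refine ⟨by simp only [ne_eq, Fin.ext_iff]; omega, Or.inl rfl⟩
      exact (ih hk).trans hadj.reachable
  refine ⟨fun u v => ?_⟩
  have hu := key u.val u.isLt
  have hv := key v.val v.isLt
  simp only [Fin.eta] at hu hv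
  exact hu.symm.trans hv

lemma H2_sum_deg (n : ℕ) (hn : 10 ≤ n) : ∑ v : Fin n, (H2 n).degree v = 2 * n + 10 := by
  rw [Finset.sum_congr rfl (fun v (_ : v ∈ Finset.univ) => H2_degree n hn v),
    Fin.sum_univ_eq_sum_range (fun i => if i < 10 then 3 else 2) n,
    sum_split n 10 (by omega)]
  have h1 : ∑ i ∈ Finset.range 10, (if i < 10 then 3 else 2) = 30 := by
    simp [Finset.sum_range_succ]
  have hc : ∀ i ∈ Finset.Ico 10 n, (if i < 10 then 3 else 2) = 2 := by
    intro i hi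
    have := (Finset.mem_Ico.mp hi).1
    rw [if_neg (by omega : ¬ i < 10)]
  have h2 : ∑ i ∈ Finset.Ico 10 n, (if i < 10 then 3 else 2) = 2 * (n - 10) := by
    rw [Finset.sum_congr rfl hc, Finset.sum_const, Nat.card_Ico, smul_eq_mul, mul_comm]
  rw [h1, h2]
  omega

lemma H2_edges (n : ℕ) (hn : 10 ≤ n) : (H2 n).edgeFinset.card = n + 5 := by
  have := (H2 n).sum_degrees_eq_twice_card_edges
  rw [H2_sum_deg n hn] at this
  omega

lemma H2_invdeg (n : ℕ) (hn : 10 ≤ n) :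
    inverseDegree (H2 n) = ((n : ℝ) - 10) / 2 + 10 / 3 := by
  rw [inverseDegree_eq]
  have hpt : ∀ v : Fin n, (1:ℝ) / ((H2 n).degree v : ℝ)
      = if (v : ℕ) < 10 then (1/3 : ℝ) else 1/2 := by
    intro v
    rw [H2_degree n hn v]
    split_ifs <;> norm_num
  rw [Finset.sum_congr rfl (fun v (_ : v ∈ Finset.univ) => hpt v),
    Fin.sum_univ_eq_sum_range (fun i => if i < 10 then (1/3 : ℝ) else 1/2) n,
    sum_split n 10 (by omega)]
  have h1 : ∑ i ∈ Finset.range 10, (if i < 10 then (1/3 : ℝ) else 1/2) = 10/3 := by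
    simp [Finset.sum_range_succ]
    norm_num
  have hc : ∀ i ∈ Finset.Ico 10 n, (if i < 10 then (1/3 : ℝ) else 1/2) = 1/2 := by
    intro i hi
    have := (Finset.mem_Ico.mp hi).1
    rw [if_neg (by omega : ¬ i < 10)]
  have h2 : ∑ i ∈ Finset.Ico 10 n, (if i < 10 then (1/3 : ℝ) else 1/2)
      = ((n : ℝ) - 10) / 2 := by
    rw [Finset.sum_congr rfl hc, Finset.sum_const, Nat.card_Ico, nsmul_eq_mul,
      Nat.cast_sub (by omega : 10 ≤ n)]
    push_cast
    ring
  rw [h1, h2]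
  ring

lemma H2_degseq (n : ℕ) (hn : 10 ≤ n) :
    ∃ σ : Equiv.Perm (Fin n), ∀ i : Fin n, ((H2 n).neighborSet (σ i)).ncard
      = (fun i : ℕ => if i < 10 then 3 else 2) (i : ℕ) := by
  refine ⟨Equiv.refl _, fun i => ?_⟩
  rw [Equiv.refl_apply, ncard_eq_degree, H2_degree n hn]

/-- Bounds for the inverse degree of a hexacyclic graph:
`(n-10)/2 + 10/3 ≤ ρ(G) ≤ (n-4) + 1/(n-1)`, with the upper bound attained by a
hexacyclic graph with degree sequence `(n-1, 4^4, 1^{n-5})` and, for `n ≥ 10`,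
the lower bound attained by a hexacyclic graph with degree sequence
`(3^{10}, 2^{n-10})`. -/
theorem hexacyclic_inverse_degree_bounds (n : ℕ) (hn : 8 ≤ n)
    (G : SimpleGraph (Fin n)) (hconn : G.Connected)
    (hedges : G.edgeSet.ncard = n + 5) :
    (((n : ℝ) - 10) / 2 + 10 / 3 ≤ inverseDegree G ∧
      inverseDegree G ≤ ((n : ℝ) - 4) + 1 / ((n : ℝ) - 1)) ∧
    (∃ H : SimpleGraph (Fin n), H.Connected ∧ H.edgeSet.ncard = n + 5 ∧
      IsDegreeSequence H
        (fun i => if i = 0 then n - 1 else if i < 5 then 4 else 1) ∧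
      inverseDegree H = ((n : ℝ) - 4) + 1 / ((n : ℝ) - 1)) ∧
    (10 ≤ n →
      ∃ H : SimpleGraph (Fin n), H.Connected ∧ H.edgeSet.ncard = n + 5 ∧
        IsDegreeSequence H (fun i => if i < 10 then 3 else 2) ∧
        inverseDegree H = ((n : ℝ) - 10) / 2 + 10 / 3) := by
  letI : DecidableRel G.Adj := Classical.decRel G.Adj
  have hedgesF : G.edgeFinset.card = n + 5 := by rw [← edgeSet_ncard]; exact hedges
  obtain ⟨hlo, hhi⟩ := main_bounds G hn hconn hedgesF
  refine ⟨⟨?_, ?_⟩, ?_, ?_⟩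
  · rw [inverseDegree_eq]; exact hlo
  · rw [inverseDegree_eq]; exact hhi
  · exact ⟨H1 n, H1_connected n hn, by rw [edgeSet_ncard]; exact H1_edges n hn,
      H1_degseq n hn, H1_invdeg n hn⟩
  · intro h10
    exact ⟨H2 n, H2_connected n h10, by rw [edgeSet_ncard]; exact H2_edges n h10,
      H2_degseq n h10, H2_invdeg n h10⟩
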